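/- Every strongly increasing numerical semigroup is a GSI-semigroup. Precisely, if S̄ = ⟨v̄₀,…,v̄_h⟩ is generated by a characteristic sequence with v̄₀ < ⋯ < v̄_h and h ≥ 1, then setting d = gcd(v̄₀,…,v̄_{h−1}), γ = v̄_h, and S = ⟨v̄₀/d,…,v̄_{h−1}/d⟩, one has S̄ = S ⊕_{d,γ} ℕ and γ > max{d·F(S), d·(v̄_{h−1}/d)}. -/

import Mathlib

/-- A numerical semigroup: a subset of ℕ containing 0, closed under addition,
with finite complement. -/
def IsNumericalSemigroup (S : Set ℕ) : Prop :=
  0 ∈ S ∧ (∀ a ∈ S, ∀ b ∈ S, a + b ∈ S) ∧ Sᶜ.Finite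

/-- Frobenius number, as an integer (so that F(ℕ) = -1). -/
noncomputable def Frob (S : Set ℕ) : ℤ :=
  sSup (((fun n : ℕ => (n : ℤ)) '' Sᶜ) ∪ {-1})

/-- Submonoid of ℕ generated by a set. -/
def GenSg (A : Set ℕ) : Set ℕ := (AddSubmonoid.closure A : Set ℕ)

/-- The gluing S ⊕_{d,γ} ℕ = d·S + ℕ·γ. -/
def Gluing (S : Set ℕ) (d γ : ℕ) : Set ℕ :=
  {x | ∃ s ∈ S, ∃ k : ℕ, x = d * s + k * γ}

/-- e_k = gcd(v₀, …, v_k). -/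
def ee (v : ℕ → ℕ) (k : ℕ) : ℕ := (Finset.range (k + 1)).gcd v

/-- (v₀,…,v_h) is a characteristic sequence. -/
def IsCharSeq (h : ℕ) (v : ℕ → ℕ) : Prop :=
  (∀ i ≤ h, 0 < v i) ∧
  (∀ k, 1 ≤ k → k ≤ h → ee v k < ee v (k - 1)) ∧
  ee v h = 1 ∧
  ∀ k, 1 ≤ k → k + 1 ≤ h → ee v (k - 1) * v k < ee v k * v (k + 1)

/-- T is a GSI-semigroup: T = S ⊕_{d,γ} ℕ where S = ⟨A⟩ is a numerical
semigroup, d ≥ 2, gcd(d,γ)=1 and γ > max{d·F(S), d·(max A)}. -/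
def IsGSI (T : Set ℕ) : Prop :=
  ∃ (A : Finset ℕ) (d γ : ℕ), A.Nonempty ∧ 2 ≤ d ∧ Nat.Coprime d γ ∧
    IsNumericalSemigroup (GenSg ↑A) ∧
    (γ : ℤ) > d * Frob (GenSg ↑A) ∧ (∀ a ∈ A, d * a < γ) ∧
    T = Gluing (GenSg ↑A) d γ



noncomputable def BB (a : ℕ → ℕ) (m : ℕ) : ℤ :=
  (∑ j ∈ Finset.range m, (((ee a j / ee a (j+1) : ℕ) : ℤ) - 1) * a (j+1)) - a 0

lemma ee_succ (a : ℕ → ℕ) (m : ℕ) : ee a (m+1) = Nat.gcd (a (m+1)) (ee a m) := by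
  unfold ee; rw [Finset.range_add_one, Finset.gcd_insert]; rfl

lemma ee_zero (a : ℕ → ℕ) : ee a 0 = a 0 := by simp [ee]

lemma ee_dvd_ee (a : ℕ → ℕ) (m : ℕ) : ee a (m+1) ∣ ee a m := by
  rw [ee_succ]; exact Nat.gcd_dvd_right _ _

lemma ee_dvd (a : ℕ → ℕ) {i m : ℕ} (hi : i ≤ m) : ee a m ∣ a i :=
  Finset.gcd_dvd (Finset.mem_range.mpr (by omega))

lemma ee_pos (a : ℕ → ℕ) (m : ℕ) (h0 : 0 < a 0) : 0 < ee a m :=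
  Nat.pos_of_dvd_of_pos (ee_dvd a (Nat.zero_le m)) h0

lemma genSg_mono {A B : Set ℕ} (h : A ⊆ B) : GenSg A ⊆ GenSg B :=
  AddSubmonoid.closure_mono h

lemma nsmul_mem_genSg {A : Set ℕ} {x : ℕ} (hx : x ∈ A) (n : ℕ) : n * x ∈ GenSg A := by
  have := (AddSubmonoid.closure A).nsmul_mem (AddSubmonoid.subset_closure hx) n
  simpa [nsmul_eq_mul, GenSg] using this

lemma add_mem_genSg {A : Set ℕ} {x y : ℕ} (hx : x ∈ GenSg A) (hy : y ∈ GenSg A) :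
    x + y ∈ GenSg A := AddSubmonoid.add_mem _ hx hy

lemma brauer (a : ℕ → ℕ) : ∀ m, (∀ i ≤ m, 0 < a i) → ∀ N : ℤ,
    (ee a m : ℤ) ∣ N → N > BB a m → ∃ n : ℕ, (n : ℤ) = N ∧ n ∈ GenSg (a '' {i | i ≤ m}) := by
  intro m
  induction m with
  | zero =>
    intro hpos N hdvd hN
    rw [ee_zero] at hdvd
    obtain ⟨q, rfl⟩ := hdvd
    have h0 : 0 < a 0 := hpos 0 le_rfl
    have hq : 0 ≤ q := by
      rcases le_or_gt 0 q with h | h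
      · exact h
      · exfalso
        have hq1 : q ≤ -1 := by omega
        have : (a 0 : ℤ) * q ≤ (a 0 : ℤ) * (-1) := by
          apply mul_le_mul_of_nonneg_left hq1 (by positivity)
        simp [BB] at hN; omega
    refine ⟨q.toNat * a 0, by push_cast [Int.toNat_of_nonneg hq]; ring, ?_⟩
    exact nsmul_mem_genSg (Set.mem_image_of_mem a (by simp : (0:ℕ) ∈ {i | i ≤ 0})) q.toNat
  | succ m ih =>
    intro hpos N hdvd hN
    set g := ee a m with hg
    set g' := ee a (m+1) with hg'
    have h0 : 0 < a 0 := hpos 0 (by omega)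
    have hgpos : 0 < g := ee_pos a m h0
    have hg'pos : 0 < g' := ee_pos a (m+1) h0
    have hdvdg : g' ∣ g := ee_dvd_ee a m
    set q := g / g' with hq
    have hqg : g' * q = g := Nat.mul_div_cancel' hdvdg
    have hqpos : 0 < q := Nat.div_pos (Nat.le_of_dvd hgpos hdvdg) hg'pos
    haveI : NeZero q := ⟨by omega⟩
    set A := a (m+1) with hA
    have hg'A : g' ∣ A := ee_dvd a (le_refl (m+1))
    have hgA : g' = Nat.gcd A g := ee_succ a m
    set A' := A / g' with hA'
    have hA'eq : g' * A' = A := Nat.mul_div_cancel' hg'A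
    have hcop : Nat.Coprime A' q := by
      have := Nat.coprime_div_gcd_div_gcd (m := A) (n := g) (by omega)
      rwa [← hgA] at this
    obtain ⟨M, hM⟩ := hdvd
    set c := ((M : ZMod q) * ((A' : ℕ) : ZMod q)⁻¹).val with hc
    have hclt : c < q := ZMod.val_lt _
    have hcv : ((c : ℕ) : ZMod q) = (M : ZMod q) * ((A' : ℕ) : ZMod q)⁻¹ :=
      ZMod.natCast_rightInverse _
    have key : ((c : ℕ) : ZMod q) * ((A' : ℕ) : ZMod q) = (M : ZMod q) := by
      rw [hcv, mul_assoc, mul_comm (((A' : ℕ) : ZMod q))⁻¹ _, ZMod.coe_mul_inv_eq_one A' hcop,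
        mul_one]
    have hzmod : ((c : ℤ) * (A' : ℤ)) ≡ M [ZMOD q] := by
      rw [← ZMod.intCast_eq_intCast_iff]
      push_cast
      exact_mod_cast key
    have hdvd1 : (g : ℤ) ∣ (N - c * A) := by
      have h1 : ((q : ℕ) : ℤ) ∣ ((c : ℤ) * A' - M) := (Int.ModEq.dvd hzmod.symm)
      have h2 : ((g' : ℕ) : ℤ) * q ∣ (g' : ℤ) * ((c : ℤ) * A' - M) := mul_dvd_mul_left _ h1
      have h3 : ((g' : ℕ) : ℤ) * ((c : ℤ) * A' - M) = c * A - N := by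
        rw [hM]
        push_cast [← hA'eq]
        ring
      have h4 : ((g : ℕ) : ℤ) = (g' : ℤ) * q := by exact_mod_cast hqg.symm
      rw [h4]
      have := h2
      rw [h3] at this
      exact (dvd_sub_comm).mp this
    have hBB : BB a (m+1) = BB a m + (((q : ℕ) : ℤ) - 1) * (A : ℤ) := by
      simp only [BB, Finset.sum_range_succ, ← hq, ← hA, ← hg, ← hg']
      ring
    have hcA : (c : ℤ) * A ≤ (((q : ℕ) : ℤ) - 1) * A := by
      have h5 : (c : ℤ) ≤ (q : ℤ) - 1 := by have := hclt; omega
      exact mul_le_mul_of_nonneg_right h5 (by positivity)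
    have hN1 : N - c * A > BB a m := by rw [hBB] at hN; linarith
    obtain ⟨n, hn, hmem⟩ := ih (fun i hi => hpos i (by omega)) (N - c * A) hdvd1 hN1
    refine ⟨n + c * A, ?_, ?_⟩
    · push_cast
      rw [hn]; ring
    · refine add_mem_genSg (genSg_mono (Set.image_mono ?_) hmem)
        (nsmul_mem_genSg (Set.mem_image_of_mem a (show (m+1) ∈ {i | i ≤ m+1} from Set.mem_setOf_eq ▸ le_refl _)) c)
      intro i hi
      simp only [Set.mem_setOf_eq] at hi ⊢
      omega

theorem SI_is_GSI (h : ℕ) (v : ℕ → ℕ) (hh : 1 ≤ h) (hv : IsCharSeq h v)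
    (hmono : ∀ i j, i < j → j ≤ h → v i < v j) :
    GenSg (v '' {i | i ≤ h}) =
      Gluing (GenSg ((fun i => v i / ee v (h - 1)) '' {i | i ≤ h - 1}))
        (ee v (h - 1)) (v h) ∧
    (v h : ℤ) >
      max ((ee v (h - 1) : ℤ) *
          Frob (GenSg ((fun i => v i / ee v (h - 1)) '' {i | i ≤ h - 1})))
        ((ee v (h - 1) : ℤ) * ((v (h - 1) / ee v (h - 1) : ℕ) : ℤ)) := by
  obtain ⟨hvpos, hdec, hone, hsi⟩ := hv
  set d := ee v (h - 1) with hd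
  set a : ℕ → ℕ := fun i => v i / d with ha
  have hdpos : 0 < d := ee_pos v (h-1) (hvpos 0 (by omega))
  have hd_dvd : ∀ i ≤ h - 1, d ∣ v i := fun i hi => ee_dvd v hi
  have hda : ∀ i ≤ h - 1, d * a i = v i := fun i hi => Nat.mul_div_cancel' (hd_dvd i hi)
  have hapos : ∀ i ≤ h - 1, 0 < a i := fun i hi =>
    Nat.div_pos (Nat.le_of_dvd (hvpos i (by omega)) (hd_dvd i hi)) hdpos
  have hee_scale : ∀ k ≤ h - 1, ee v k = d * ee a k := by
    intro k hk
    have h1 : (Finset.range (k+1)).gcd v = (Finset.range (k+1)).gcd (fun i => d * a i) := by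
      apply Finset.gcd_congr rfl
      intro i hi
      exact (hda i (by simp at hi; omega)).symm
    show (Finset.range (k+1)).gcd v = d * (Finset.range (k+1)).gcd a
    rw [h1, Finset.gcd_mul_left]
    simp
  have hee_a_one : ee a (h - 1) = 1 := by
    have h1 := hee_scale (h-1) le_rfl
    rw [← hd] at h1
    have h2 : d * 1 = d * ee a (h-1) := by rw [mul_one]; exact h1
    exact (Nat.eq_of_mul_eq_mul_left hdpos h2).symm
  set S' := GenSg (a '' {i | i ≤ h - 1}) with hS'
  constructor
  · -- set equality
    apply Set.Subset.antisymm
    · -- ⊆ : closure_le into the gluing as an AddSubmonoid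
      have hG : ∃ G : AddSubmonoid ℕ, (G : Set ℕ) = Gluing S' d (v h) := by
        refine ⟨{ carrier := Gluing S' d (v h),
                  zero_mem' := ⟨0, (AddSubmonoid.closure _).zero_mem, 0, by ring⟩,
                  add_mem' := ?_ }, rfl⟩
        rintro x y ⟨s₁, hs₁, k₁, rfl⟩ ⟨s₂, hs₂, k₂, rfl⟩
        exact ⟨s₁ + s₂, add_mem_genSg hs₁ hs₂, k₁ + k₂, by ring⟩
      obtain ⟨G, hGeq⟩ := hG
      intro x hx
      rw [← hGeq]
      refine AddSubmonoid.closure_le.mpr ?_ hx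
      rintro y ⟨i, hi, rfl⟩
      simp only [Set.mem_setOf_eq] at hi
      rw [hGeq]
      rcases Nat.lt_or_ge i h with hlt | hge
      · have hi' : i ≤ h - 1 := by omega
        exact ⟨a i, AddSubmonoid.subset_closure ⟨i, hi', rfl⟩, 0, by rw [hda i hi']; ring⟩
      · have : i = h := by omega
        subst this
        exact ⟨0, (AddSubmonoid.closure _).zero_mem, 1, by ring⟩
    · rintro x ⟨s, hs, k, rfl⟩
      have hds : d * s ∈ GenSg (v '' {i | i ≤ h}) := by
        have hle : AddSubmonoid.closure (a '' {i | i ≤ h - 1}) ≤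
            AddSubmonoid.comap (AddMonoidHom.mulLeft d)
              (AddSubmonoid.closure (v '' {i | i ≤ h})) := by
          apply AddSubmonoid.closure_le.mpr
          rintro y ⟨i, hi, rfl⟩
          simp only [Set.mem_setOf_eq] at hi
          rw [SetLike.mem_coe, AddSubmonoid.mem_comap]
          show d * a i ∈ _
          rw [hda i hi]
          exact AddSubmonoid.subset_closure ⟨i, by simp only [Set.mem_setOf_eq]; omega, rfl⟩
        exact hle hs
      exact add_mem_genSg hds (nsmul_mem_genSg (Set.mem_image_of_mem v (show h ∈ {i | i ≤ h} from Set.mem_setOf_eq ▸ le_rfl)) k)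
  · -- inequality
    rw [gt_iff_lt, max_lt_iff]
    have hvh1 : v (h - 1) < v h := hmono (h-1) h (by omega) le_rfl
    constructor
    · -- d * Frob < v h
      have hFrob : Frob S' ≤ max (BB a (h-1)) (-1) := by
        refine csSup_le ⟨-1, ?_⟩ ?_
        · right; rfl
        rintro x (⟨n, hn, rfl⟩ | hx)
        · refine le_trans ?_ (le_max_left _ _)
          by_contra hlt
          push_neg at hlt
          obtain ⟨n', hn', hmem⟩ := brauer a (h-1) hapos n
            (by rw [hee_a_one]; exact one_dvd _) hlt
          have : n' = n := by exact_mod_cast hn'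
          subst this
          exact hn hmem
        · simp only [Set.mem_singleton_iff] at hx
          subst hx
          exact le_max_right _ _
      have hBBlt : (d : ℤ) * BB a (h-1) < v h := by
        have hterm : ∀ j ∈ Finset.range (h-1),
            (((ee a j / ee a (j+1) : ℕ) : ℤ) - 1) * (v (j+1) : ℤ)
              ≤ (v (j+2) : ℤ) - (v (j+1) : ℤ) := by
          intro j hj
          simp only [Finset.mem_range] at hj
          set r := ee a j / ee a (j+1) with hr
          have hrdvd : ee a (j+1) ∣ ee a j := ee_dvd_ee a j
          have hre : r * ee a (j+1) = ee a j := by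
            rw [hr, Nat.div_mul_cancel hrdvd]
          have hsi' : ee v j * v (j+1) < ee v (j+1) * v (j+2) :=
            hsi (j+1) (by omega) (by omega)
          rw [hee_scale j (by omega), hee_scale (j+1) (by omega)] at hsi'
          have hepos : 0 < ee a (j+1) := ee_pos a (j+1) (hapos 0 (by omega))
          have hrv : r * v (j+1) < v (j+2) := by
            have h1 : ee a j * v (j+1) < ee a (j+1) * v (j+2) := by
              have := hsi'
              rw [mul_assoc, mul_assoc] at this
              exact Nat.lt_of_mul_lt_mul_left this
            rw [← hre] at h1
            have h2 : ee a (j+1) * (r * v (j+1)) < ee a (j+1) * v (j+2) := by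
              calc ee a (j+1) * (r * v (j+1)) = r * ee a (j+1) * v (j+1) := by ring
                _ < ee a (j+1) * v (j+2) := h1
            exact Nat.lt_of_mul_lt_mul_left h2
          have : (r : ℤ) * v (j+1) < v (j+2) := by exact_mod_cast hrv
          have hv1 : (0:ℤ) ≤ v (j+1) := by positivity
          nlinarith
        have hsum : ∑ j ∈ Finset.range (h-1),
            (((ee a j / ee a (j+1) : ℕ) : ℤ) - 1) * (v (j+1) : ℤ)
              ≤ (v h : ℤ) - v 1 := by
          calc ∑ j ∈ Finset.range (h-1), (((ee a j / ee a (j+1) : ℕ) : ℤ) - 1) * (v (j+1) : ℤ)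
              ≤ ∑ j ∈ Finset.range (h-1), ((v (j+2) : ℤ) - (v (j+1) : ℤ)) :=
                Finset.sum_le_sum hterm
            _ = (v ((h-1)+1) : ℤ) - v 1 := Finset.sum_range_sub (fun j => (v (j+1) : ℤ)) (h-1)
            _ = (v h : ℤ) - v 1 := by rw [Nat.sub_add_cancel hh]
        have hdBB : (d : ℤ) * BB a (h-1) =
            (∑ j ∈ Finset.range (h-1),
              (((ee a j / ee a (j+1) : ℕ) : ℤ) - 1) * (v (j+1) : ℤ)) - v 0 := by
          rw [BB, mul_sub, Finset.mul_sum]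
          congr 1
          · apply Finset.sum_congr rfl
            intro j hj
            simp only [Finset.mem_range] at hj
            have := hda (j+1) (by omega)
            have hc : ((d : ℤ)) * (a (j+1) : ℤ) = (v (j+1) : ℤ) := by exact_mod_cast this
            rw [← hc]; ring
          · have := hda 0 (by omega)
            exact_mod_cast this
        rw [hdBB]
        have h0 : (0:ℤ) < v 0 := by exact_mod_cast hvpos 0 (by omega)
        have h1 : (0:ℤ) < v 1 := by exact_mod_cast hvpos 1 (by omega)
        linarith
      have hvhpos : (0:ℤ) < v h := by exact_mod_cast hvpos h le_rfl
      calc (d : ℤ) * Frob S' ≤ (d:ℤ) * max (BB a (h-1)) (-1) := by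
            apply mul_le_mul_of_nonneg_left hFrob (by positivity)
        _ = max ((d:ℤ) * BB a (h-1)) ((d:ℤ) * (-1)) := mul_max_of_nonneg _ _ (by positivity)
        _ < v h := by
            rw [max_lt_iff]
            constructor
            · exact hBBlt
            · have : (0:ℤ) < d := by exact_mod_cast hdpos
              linarith
    · -- d * (v (h-1) / d) < v h
      have : (d : ℤ) * ((v (h-1) / d : ℕ) : ℤ) = (v (h-1) : ℤ) := by
        exact_mod_cast hda (h-1) le_rfl
      rw [this]
      exact_mod_cast hvh1
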